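/- Let 0 < θ < 1/2 be real. Then for every square-summable real sequence (ξ_k)_{k∈ℤ≥0} the double series Σ_{j=0}^∞ Σ_{k=0}^∞ ξ_j ξ_k/(j+k+θ) converges and satisfies 0 ≤ Σ_{j,k} ξ_j ξ_k/(j+k+θ) ≤ (π/sin(πθ))·Σ_{k=0}^∞ ξ_k². Moreover the constant π/sin(πθ) is best possible: there exists a nonzero square-summable real sequence (ξ_k) for which Σ_{j,k} ξ_j ξ_k/(j+k+θ) = (π/sin(πθ))·Σ_k ξ_k². -/

import Mathlib

open Real

noncomputable def hilbX (θ : ℝ) (k : ℕ) : ℝ := Real.Gamma (k + θ) / (k.factorial : ℝ)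

lemma hilbX_pos {θ : ℝ} (hθ0 : 0 < θ) (k : ℕ) : 0 < hilbX θ k :=
  div_pos (Real.Gamma_pos_of_pos (by positivity)) (by exact_mod_cast k.factorial_pos)

lemma hilbX_rec {θ : ℝ} (hθ0 : 0 < θ) (k : ℕ) :
    ((k : ℝ) + 1) * hilbX θ (k + 1) = ((k : ℝ) + θ) * hilbX θ k := by
  have hk : ((k : ℝ) + θ) ≠ 0 := by positivity
  have h1 : ((k + 1 : ℕ) : ℝ) + θ = ((k : ℝ) + θ) + 1 := by push_cast; ring
  have h2 : Real.Gamma (((k : ℝ) + θ) + 1) = ((k : ℝ) + θ) * Real.Gamma ((k : ℝ) + θ) :=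
    Real.Gamma_add_one hk
  have hf : ((k + 1).factorial : ℝ) = ((k : ℝ) + 1) * (k.factorial : ℝ) := by
    rw [Nat.factorial_succ]; push_cast; ring
  unfold hilbX
  rw [h1, h2, hf]
  have hfk : (k.factorial : ℝ) ≠ 0 := by exact_mod_cast k.factorial_pos.ne'
  field_simp

lemma hilbX_le {θ : ℝ} (hθ0 : 0 < θ) (hθ1 : θ < 1) (k : ℕ) :
    hilbX θ k ≤ Real.Gamma θ * ((k : ℝ) + 1) ^ (θ - 1) := by
  induction k with
  | zero =>
    simp [hilbX, Real.one_rpow]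
  | succ k ih =>
    have hG : 0 < Real.Gamma θ := Real.Gamma_pos_of_pos hθ0
    have hk1 : (0:ℝ) < (k : ℝ) + 1 := by positivity
    have hk2 : (0:ℝ) < (k : ℝ) + 2 := by positivity
    have hs0 : (0:ℝ) ≤ 1 / ((k:ℝ)+1) := by positivity
    have hb : ((1 : ℝ) + 1 / ((k:ℝ)+1)) ^ (1 - θ) ≤ ((k:ℝ) + 2 - θ) / ((k:ℝ)+1) := by
      have := rpow_one_add_le_one_add_mul_self (s := 1 / ((k:ℝ)+1)) (p := 1 - θ)
        (by linarith) (by linarith) (by linarith)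
      have h2 : 1 + (1 - θ) * (1 / ((k:ℝ)+1)) = ((k:ℝ) + 2 - θ) / ((k:ℝ)+1) := by
        field_simp; ring
      linarith [h2 ▸ this]
    have hratio : ((k:ℝ) + 2) ^ (1 - θ) ≤ ((k:ℝ)+1) ^ (1-θ) * (((k:ℝ) + 2 - θ) / ((k:ℝ)+1)) := by
      have h1 : ((k:ℝ) + 2) = ((k:ℝ)+1) * (1 + 1/((k:ℝ)+1)) := by field_simp; ring
      calc ((k:ℝ) + 2) ^ (1 - θ) = (((k:ℝ)+1) * (1 + 1/((k:ℝ)+1))) ^ (1-θ) := by rw [← h1]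
        _ = ((k:ℝ)+1) ^ (1-θ) * ((1 + 1/((k:ℝ)+1)) ^ (1-θ)) :=
            Real.mul_rpow (by positivity) (by positivity)
        _ ≤ ((k:ℝ)+1) ^ (1-θ) * (((k:ℝ) + 2 - θ) / ((k:ℝ)+1)) :=
            mul_le_mul_of_nonneg_left hb (by positivity)
    set a : ℝ := ((k:ℝ)+1) ^ (1-θ) with ha
    set b : ℝ := ((k:ℝ)+2) ^ (1-θ) with hbdef
    have hapos : 0 < a := Real.rpow_pos_of_pos hk1 _
    have hbpos : 0 < b := Real.rpow_pos_of_pos hk2 _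
    have h4 : ((k:ℝ)+θ) * (((k:ℝ) + 2 - θ)) ≤ ((k:ℝ)+1) * ((k:ℝ)+1) := by
      nlinarith [sq_nonneg (1 - θ)]
    have hmul : ((k:ℝ)+θ) * b ≤ ((k:ℝ)+1) * a := by
      have h3 : ((k:ℝ)+θ) * b ≤ ((k:ℝ)+θ) * (a * (((k:ℝ) + 2 - θ) / ((k:ℝ)+1))) :=
        mul_le_mul_of_nonneg_left hratio (by positivity)
      have h6 : ((k:ℝ)+θ) * (a * (((k:ℝ) + 2 - θ) / ((k:ℝ)+1))) ≤ ((k:ℝ)+1) * a := by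
        rw [show ((k:ℝ)+θ) * (a * (((k:ℝ) + 2 - θ) / ((k:ℝ)+1)))
            = (((k:ℝ)+θ) * ((k:ℝ) + 2 - θ)) * a / ((k:ℝ)+1) by ring, div_le_iff₀ hk1]
        nlinarith [mul_le_mul_of_nonneg_right h4 hapos.le]
      linarith
    have hkey : ((k:ℝ) + θ) * ((k:ℝ)+1) ^ (θ-1) ≤ ((k:ℝ)+1) * ((k:ℝ)+2) ^ (θ-1) := by
      have e1 : ((k:ℝ)+1) ^ (θ-1) = a⁻¹ := by
        rw [ha, ← Real.rpow_neg hk1.le]; norm_num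
      have e2 : ((k:ℝ)+2) ^ (θ-1) = b⁻¹ := by
        rw [hbdef, ← Real.rpow_neg hk2.le]; norm_num
      rw [e1, e2, ← div_eq_mul_inv, ← div_eq_mul_inv, div_le_div_iff₀ hapos hbpos]
      exact hmul
    have h5 : hilbX θ (k+1) = ((k:ℝ)+θ) * hilbX θ k / ((k:ℝ)+1) := by
      have := hilbX_rec hθ0 k
      field_simp
      linarith
    have hXnonneg : 0 ≤ hilbX θ k := (hilbX_pos hθ0 k).le
    have cast1 : ((k+1 : ℕ) : ℝ) + 1 = (k:ℝ) + 2 := by push_cast; ring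
    rw [h5, cast1]
    calc ((k:ℝ)+θ) * hilbX θ k / ((k:ℝ)+1)
        ≤ ((k:ℝ)+θ) * (Real.Gamma θ * ((k:ℝ)+1) ^ (θ-1)) / ((k:ℝ)+1) := by gcongr
      _ = Real.Gamma θ * (((k:ℝ)+θ) * ((k:ℝ)+1) ^ (θ-1)) / ((k:ℝ)+1) := by ring
      _ ≤ Real.Gamma θ * (((k:ℝ)+1) * ((k:ℝ)+2) ^ (θ-1)) / ((k:ℝ)+1) := by gcongr
      _ = Real.Gamma θ * ((k:ℝ)+2) ^ (θ-1) := by field_simp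

lemma summable_shift_rpow {r : ℝ} (hr : r < -1) :
    Summable (fun k : ℕ => ((k : ℝ) + 1) ^ r) := by
  have h : Summable (fun k : ℕ => ((k + 1 : ℕ) : ℝ) ^ r) := by
    exact (summable_nat_add_iff (f := fun n : ℕ => (n:ℝ) ^ r) 1).2
      (Real.summable_nat_rpow.2 hr)
  simpa [Nat.cast_add, Nat.cast_one] using h

lemma hilbX_sq_summable {θ : ℝ} (hθ0 : 0 < θ) (hθ : θ < 1 / 2) :
    Summable (fun k => hilbX θ k ^ 2) := by
  have hθ1 : θ < 1 := by linarith
  apply Summable.of_nonneg_of_le (fun k => sq_nonneg _)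
    (fun k => ?_) ((summable_shift_rpow (r := 2*θ - 2) (by linarith)).mul_left
      (Real.Gamma θ ^ 2))
  have h1 := hilbX_le hθ0 hθ1 k
  have h2 : (0:ℝ) ≤ hilbX θ k := (hilbX_pos hθ0 k).le
  have h3 : ((k:ℝ)+1) ^ (θ-1) * ((k:ℝ)+1) ^ (θ-1) = ((k:ℝ)+1) ^ (2*θ-2) := by
    rw [← Real.rpow_add (by positivity)]; ring_nf
  calc hilbX θ k ^ 2 ≤ (Real.Gamma θ * ((k:ℝ)+1) ^ (θ-1)) ^ 2 := by
        apply sq_le_sq' (by nlinarith [Real.Gamma_pos_of_pos hθ0,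
          Real.rpow_pos_of_pos (show (0:ℝ) < (k:ℝ)+1 by positivity) (θ-1)]) h1
    _ = Real.Gamma θ ^ 2 * (((k:ℝ)+1) ^ (θ-1) * ((k:ℝ)+1) ^ (θ-1)) := by ring
    _ = Real.Gamma θ ^ 2 * ((k:ℝ)+1) ^ (2*θ-2) := by rw [h3]

lemma hilbX_slice_summable {θ : ℝ} (hθ0 : 0 < θ) (hθ1 : θ < 1) (c : ℝ) (hc : 0 ≤ c) :
    Summable (fun j : ℕ => hilbX θ j / ((j : ℝ) + c + θ)) := by
  apply Summable.of_nonneg_of_le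
    (fun j => div_nonneg (hilbX_pos hθ0 j).le (by positivity))
    (fun j => ?_)
    ((summable_shift_rpow (r := θ - 2) (by linarith)).mul_left (Real.Gamma θ / θ))
  have hj1 : (0:ℝ) < (j:ℝ) + 1 := by positivity
  have hd : θ * ((j:ℝ)+1) ≤ (j:ℝ) + c + θ := by nlinarith
  have h1 := hilbX_le hθ0 hθ1 j
  have h2 : hilbX θ j / ((j:ℝ) + c + θ) ≤ (Real.Gamma θ * ((j:ℝ)+1) ^ (θ-1)) / (θ * ((j:ℝ)+1)) := by
    apply div_le_div₀ (by positivity) h1 (by positivity) hd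
  refine h2.trans (le_of_eq ?_)
  rw [show Real.Gamma θ / θ * ((j:ℝ)+1) ^ (θ-2) = Real.Gamma θ * (((j:ℝ)+1) ^ (θ-2)) / θ by ring]
  rw [show ((j:ℝ)+1) ^ (θ-2) = ((j:ℝ)+1) ^ (θ-1) * ((j:ℝ)+1) ^ (-1 : ℝ) by
    rw [← Real.rpow_add hj1]; ring_nf]
  rw [Real.rpow_neg_one]
  field_simp

lemma hilbX_le_Gamma {θ : ℝ} (hθ0 : 0 < θ) (hθ1 : θ < 1) (k : ℕ) :
    hilbX θ k ≤ Real.Gamma θ := by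
  have h1 := hilbX_le hθ0 hθ1 k
  have h2 : ((k:ℝ)+1) ^ (θ-1) ≤ 1 :=
    Real.rpow_le_one_of_one_le_of_nonpos (by norm_num) (by linarith)
  calc hilbX θ k ≤ Real.Gamma θ * ((k:ℝ)+1) ^ (θ-1) := h1
    _ ≤ Real.Gamma θ * 1 := by
        exact mul_le_mul_of_nonneg_left h2 (Real.Gamma_pos_of_pos hθ0).le
    _ = Real.Gamma θ := mul_one _

lemma hilbX_summable_geom {θ : ℝ} (hθ0 : 0 < θ) (hθ1 : θ < 1) {y : ℝ} (hy : |y| < 1) :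
    Summable (fun j => hilbX θ j * y ^ j) := by
  apply Summable.of_norm_bounded (g := fun j => Real.Gamma θ * |y| ^ j)
    ((summable_geometric_of_lt_one (abs_nonneg y) hy).mul_left _)
  intro j
  rw [norm_mul, norm_pow, Real.norm_eq_abs, Real.norm_eq_abs,
    abs_of_pos (hilbX_pos hθ0 j)]
  exact mul_le_mul_of_nonneg_right (hilbX_le_Gamma hθ0 hθ1 j) (by positivity)

lemma hilbX_binomial {θ : ℝ} (hθ0 : 0 < θ) (hθ1 : θ < 1) {t : ℝ} (ht0 : 0 ≤ t) (ht1 : t < 1) :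
    HasSum (fun j => hilbX θ j * t ^ j) (Real.Gamma θ * (1 - t) ^ (-θ)) := by
  set r : ℝ := (1 + t) / 2 with hr
  have hr0 : 0 < r := by rw [hr]; linarith
  have hr1 : r < 1 := by rw [hr]; linarith
  have htr : t < r := by rw [hr]; linarith
  set s : Set ℝ := Set.Ioo (-r) r with hs
  set F : ℝ → ℝ := fun y => ∑' j, hilbX θ j * y ^ j with hF
  -- derivative bound
  set u : ℕ → ℝ := fun n => (Real.Gamma θ / r) * ((n:ℝ) ^ 1 * r ^ n) with hu
  have hu_sum : Summable u :=
    (summable_pow_mul_geometric_of_norm_lt_one (R := ℝ) (r := r) 1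
      (by rwa [Real.norm_eq_abs, abs_of_pos hr0])).mul_left _
  have hg : ∀ (n : ℕ) (y : ℝ), y ∈ s →
      HasDerivAt (fun z : ℝ => hilbX θ n * z ^ n) (hilbX θ n * ((n:ℝ) * y ^ (n - 1))) y :=
    fun n y _ => (hasDerivAt_pow n y).const_mul _
  have hg' : ∀ (n : ℕ) (y : ℝ), y ∈ s → ‖hilbX θ n * ((n:ℝ) * y ^ (n - 1))‖ ≤ u n := by
    intro n y hy
    rcases n with _ | m
    · simp [hu]
    · have hyr : |y| ≤ r := by
        rw [abs_le]
        constructor <;> [linarith [hy.1]; linarith [hy.2]]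
      rw [norm_mul, norm_mul, Real.norm_eq_abs, Real.norm_eq_abs, Real.norm_eq_abs,
        abs_of_pos (hilbX_pos hθ0 _), abs_pow]
      have h1 : |y| ^ (m + 1 - 1) ≤ r ^ m := by
        simpa using pow_le_pow_left₀ (abs_nonneg y) hyr m
      have h2 : |((m+1 : ℕ) : ℝ)| = ((m:ℝ) + 1) := by
        rw [abs_of_nonneg (by positivity)]; push_cast; ring
      rw [h2]
      have h3 : hilbX θ (m+1) * (((m:ℝ)+1) * |y| ^ (m + 1 - 1))
          ≤ Real.Gamma θ * (((m:ℝ)+1) * r ^ m) := by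
        apply mul_le_mul (hilbX_le_Gamma hθ0 hθ1 _)
          (by exact mul_le_mul_of_nonneg_left h1 (by positivity)) (by positivity)
          (Real.Gamma_pos_of_pos hθ0).le
      refine h3.trans (le_of_eq ?_)
      show _ = Real.Gamma θ / r * (((m+1:ℕ):ℝ) ^ 1 * r ^ (m+1))
      push_cast
      field_simp
      ring
  have h0s : (0:ℝ) ∈ s := by constructor <;> [linarith; linarith]
  have hg0 : Summable (fun n => hilbX θ n * (0:ℝ) ^ n) := by
    apply summable_of_ne_finset_zero (s := {0})
    intro n hn
    have : n ≠ 0 := by simpa using hn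
    simp [zero_pow this]
  have hderivF : ∀ y ∈ s, HasDerivAt F (∑' n, hilbX θ n * ((n:ℝ) * y ^ (n - 1))) y := by
    intro y hy
    exact hasDerivAt_tsum_of_isPreconnected hu_sum isOpen_Ioo
      (convex_Ioo _ _).isPreconnected hg hg' h0s hg0 hy
  -- the ODE identity
  have hub : ∀ y : ℝ, y ∈ s → (1 - y) * (∑' n, hilbX θ n * ((n:ℝ) * y ^ (n - 1))) = θ * F y := by
    intro y hy
    have hyabs : |y| < 1 := by
      rw [abs_lt]; constructor <;> [linarith [hy.1]; linarith [hy.2]]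
    -- Summable of (n+θ) x_n y^n
    have hsumA : Summable (fun n : ℕ => ((n:ℝ) + θ) * (hilbX θ n * y ^ n)) := by
      apply Summable.of_norm_bounded
        (g := fun n : ℕ => Real.Gamma θ * (((n:ℝ) + 1) * |y| ^ n)) ?_
      · intro n
        rw [norm_mul, norm_mul, Real.norm_eq_abs, Real.norm_eq_abs, Real.norm_eq_abs,
          abs_of_pos (hilbX_pos hθ0 n), abs_of_nonneg (show (0:ℝ) ≤ (n:ℝ) + θ by have := Nat.cast_nonneg (α := ℝ) n; linarith),
          abs_pow]
        calc ((n:ℝ) + θ) * (hilbX θ n * |y| ^ n)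
            ≤ ((n:ℝ) + 1) * (Real.Gamma θ * |y| ^ n) := by
              apply mul_le_mul (by linarith)
                (mul_le_mul_of_nonneg_right (hilbX_le_Gamma hθ0 hθ1 n) (by positivity))
                (mul_nonneg (hilbX_pos hθ0 n).le (by positivity)) (by positivity)
          _ = Real.Gamma θ * (((n:ℝ) + 1) * |y| ^ n) := by ring
      · apply Summable.mul_left
        have h1 : Summable (fun n : ℕ => ((n:ℝ) ^ 1 * |y| ^ n)) :=
          summable_pow_mul_geometric_of_norm_lt_one 1 (by rwa [Real.norm_eq_abs, abs_abs])
        have h2 : Summable (fun n : ℕ => |y| ^ n) :=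
          summable_geometric_of_lt_one (abs_nonneg y) hyabs
        have := h1.add h2
        apply this.congr
        intro n; push_cast; ring
    set S : ℝ := ∑' n : ℕ, ((n:ℝ) + θ) * (hilbX θ n * y ^ n) with hS
    have hAS : HasSum (fun n : ℕ => ((n:ℝ) + θ) * (hilbX θ n * y ^ n)) S := hsumA.hasSum
    -- G y = S
    have hfS : HasSum (fun n => hilbX θ n * ((n:ℝ) * y ^ (n - 1))) S := by
      rw [← hasSum_nat_add_iff' 1]
      have he : ∀ n : ℕ, hilbX θ (n + 1) * (((n+1 : ℕ):ℝ) * y ^ (n + 1 - 1))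
          = ((n:ℝ) + θ) * (hilbX θ n * y ^ n) := by
        intro n
        have := hilbX_rec hθ0 n
        have hc : ((n+1:ℕ):ℝ) = (n:ℝ) + 1 := by push_cast; ring
        rw [hc]
        have h2 : n + 1 - 1 = n := rfl
        rw [h2]
        linear_combination y ^ n * this
      have hz : ∑ i ∈ Finset.range 1, hilbX θ i * ((i:ℝ) * y ^ (i - 1)) = 0 := by simp
      rw [hz, sub_zero]
      have hfun : (fun n : ℕ => hilbX θ (n+1) * (((n+1:ℕ):ℝ) * y ^ (n + 1 - 1)))
          = fun n : ℕ => ((n:ℝ) + θ) * (hilbX θ n * y ^ n) := funext he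
      exact hfun ▸ hAS
    have hGS : (∑' n, hilbX θ n * ((n:ℝ) * y ^ (n - 1))) = S := hfS.tsum_eq
    -- S = θ F y + y S
    have hsplit : ∀ n : ℕ, ((n:ℝ) + θ) * (hilbX θ n * y ^ n)
        = θ * (hilbX θ n * y ^ n) + y * (hilbX θ n * ((n:ℝ) * y ^ (n - 1))) := by
      intro n
      rcases n with _ | m
      · simp
      · simp only [Nat.add_sub_cancel]
        push_cast
        linear_combination (((m:ℝ) + 1) * hilbX θ (m + 1)) * pow_succ y m
    have hsum1 : Summable (fun n => θ * (hilbX θ n * y ^ n)) :=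
      (hilbX_summable_geom hθ0 hθ1 hyabs).mul_left θ
    have hsum2 : Summable (fun n => y * (hilbX θ n * ((n:ℝ) * y ^ (n - 1)))) :=
      hfS.summable.mul_left y
    have : S = θ * F y + y * S := by
      rw [hS]
      calc ∑' n : ℕ, ((n:ℝ) + θ) * (hilbX θ n * y ^ n)
          = ∑' n : ℕ, (θ * (hilbX θ n * y ^ n) + y * (hilbX θ n * ((n:ℝ) * y ^ (n - 1)))) := by
            exact tsum_congr hsplit
        _ = (∑' n : ℕ, θ * (hilbX θ n * y ^ n)) + ∑' n : ℕ, y * (hilbX θ n * ((n:ℝ) * y ^ (n - 1))) :=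
            Summable.tsum_add hsum1 hsum2
        _ = θ * F y + y * S := by
            rw [tsum_mul_left, tsum_mul_left, hGS, hF]
    rw [hGS]
    linarith
  -- H is constant on [0, t]
  set H : ℝ → ℝ := fun y => (1 - y) ^ θ * F y with hH
  have hIcc : Set.Icc (0:ℝ) t ⊆ s := by
    intro y hy
    exact ⟨by linarith [hy.1], by linarith [hy.2]⟩
  have hderivH : ∀ y ∈ Set.Icc (0:ℝ) t, HasDerivAt H 0 y := by
    intro y hy
    have hys : y ∈ s := hIcc hy
    have hy1 : 0 < 1 - y := by have h : y < r := hys.2; linarith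
    have h1 : HasDerivAt (fun z : ℝ => (1 - z) ^ θ) (θ * (1 - y) ^ (θ - 1) * (-1)) y := by
      have hin : HasDerivAt (fun z : ℝ => 1 - z) (-1) y := (hasDerivAt_id y).const_sub 1
      have hout : HasDerivAt (fun x : ℝ => x ^ θ) (θ * (1 - y) ^ (θ - 1)) (1 - y) :=
        Real.hasDerivAt_rpow_const (Or.inl hy1.ne')
      exact hout.comp y hin
    have h2 := hderivF y hys
    have h3 := h1.mul h2
    have h4 : θ * (1 - y) ^ (θ - 1) * (-1) * F y
        + (1 - y) ^ θ * (∑' n, hilbX θ n * ((n:ℝ) * y ^ (n - 1))) = 0 := by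
      have e1 : (1 - y) ^ θ = (1 - y) ^ (θ - 1) * (1 - y) := by
        nth_rewrite 1 [show θ = (θ - 1) + 1 by ring]
        rw [Real.rpow_add hy1, Real.rpow_one]
      rw [e1]
      have := hub y hys
      linear_combination (1 - y) ^ (θ - 1) * this
    exact h4 ▸ h3
  have hcont : ContinuousOn H (Set.Icc 0 t) :=
    fun y hy => ((hderivH y hy).continuousAt).continuousWithinAt
  have hconst := constant_of_has_deriv_right_zero hcont
    (fun y hy => ((hderivH y (Set.mem_Icc.2 ⟨hy.1, hy.2.le⟩)).hasDerivWithinAt))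
  have hHt : H t = H 0 := hconst t (Set.mem_Icc.2 ⟨ht0, le_refl t⟩)
  -- H 0 = Gamma θ
  have hF0 : F 0 = Real.Gamma θ := by
    show (∑' j : ℕ, hilbX θ j * (0:ℝ) ^ j) = Real.Gamma θ
    rw [tsum_eq_single 0 (fun j hj => by simp [zero_pow hj])]
    simp [hilbX]
  have hH0 : H 0 = Real.Gamma θ := by
    rw [hH]; simp [hF0]
  have h1t : 0 < 1 - t := by linarith
  have hFt : F t = Real.Gamma θ * (1 - t) ^ (-θ) := by
    have : (1 - t) ^ θ * F t = Real.Gamma θ := by rw [← hH0, ← hHt]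
    have hpos : (0:ℝ) < (1 - t) ^ θ := Real.rpow_pos_of_pos h1t θ
    rw [Real.rpow_neg h1t.le]
    field_simp
    linarith [this]
  have hsummable : Summable (fun j => hilbX θ j * t ^ j) :=
    hilbX_summable_geom hθ0 hθ1 (by rw [abs_of_nonneg ht0]; exact ht1)
  have h2 : (∑' j, hilbX θ j * t ^ j) = Real.Gamma θ * (1 - t) ^ (-θ) := hFt
  exact h2 ▸ hsummable.hasSum

lemma real_beta {a b : ℝ} (ha : 0 < a) (hb : 0 < b) :
    ∫ t in (0:ℝ)..1, t ^ (a - 1) * (1 - t) ^ (b - 1)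
      = Real.Gamma a * Real.Gamma b / Real.Gamma (a + b) := by
  have h1 : Complex.betaIntegral (a : ℂ) (b : ℂ)
      = ((∫ t in (0:ℝ)..1, t ^ (a - 1) * (1 - t) ^ (b - 1) : ℝ) : ℂ) := by
    rw [Complex.betaIntegral, ← intervalIntegral.integral_ofReal]
    apply intervalIntegral.integral_congr
    intro x hx
    rw [Set.uIcc_of_le (by norm_num : (0:ℝ) ≤ 1)] at hx
    have hx0 : (0:ℝ) ≤ x := hx.1
    have hx1 : (0:ℝ) ≤ 1 - x := by linarith [hx.2]
    push_cast
    rw [Complex.ofReal_cpow hx0, Complex.ofReal_cpow hx1]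
    push_cast
    ring
  have h2 := Complex.Gamma_mul_Gamma_eq_betaIntegral
    (s := (a:ℂ)) (t := (b:ℂ)) (by simpa using ha) (by simpa using hb)
  rw [h1, Complex.Gamma_ofReal, Complex.Gamma_ofReal, ← Complex.ofReal_add,
    Complex.Gamma_ofReal, ← Complex.ofReal_mul, ← Complex.ofReal_mul] at h2
  have h3 := Complex.ofReal_inj.1 h2
  have h4 : Real.Gamma (a + b) ≠ 0 := (Real.Gamma_pos_of_pos (by linarith)).ne'
  field_simp
  linarith [h3]

lemma hilbX_eigen {θ : ℝ} (hθ0 : 0 < θ) (hθ1 : θ < 1) (k : ℕ) :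
    HasSum (fun j : ℕ => hilbX θ j / ((j : ℝ) + k + θ))
      (Real.Gamma θ * Real.Gamma (1 - θ) * hilbX θ k) := by
  have hS : Summable (fun j : ℕ => hilbX θ j / ((j : ℝ) + k + θ)) :=
    hilbX_slice_summable hθ0 hθ1 (k : ℝ) (Nat.cast_nonneg k)
  set c : ℝ := (k : ℝ) + θ - 1 with hc
  have hcm1 : (-1 : ℝ) < c := by
    rw [hc]; have := Nat.cast_nonneg (α := ℝ) k; linarith
  set f : ℕ → ℝ → ℝ := fun j t => hilbX θ j * t ^ j * t ^ c with hf
  -- Step A : interval integral of each term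
  have hA : ∀ j : ℕ, ∫ t in (0:ℝ)..1, f j t = hilbX θ j / ((j : ℝ) + k + θ) := by
    intro j
    have hj : (0:ℝ) < (j : ℝ) + k + θ := by
      have := Nat.cast_nonneg (α := ℝ) j; have := Nat.cast_nonneg (α := ℝ) k; linarith
    have hEq : Set.EqOn (f j) (fun t => hilbX θ j * t ^ (((j : ℝ) + k + θ) - 1))
        (Set.uIcc (0:ℝ) 1) := by
      intro t ht
      rw [Set.uIcc_of_le (by norm_num : (0:ℝ) ≤ 1)] at ht
      have hck : ∀ m n : ℕ, (m:ℝ) + (n:ℝ) + θ - 1 ≠ 0 := by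
        intro m n h
        rcases Nat.eq_zero_or_pos (m + n) with h' | h'
        · obtain ⟨hm, hn⟩ := Nat.add_eq_zero.mp h'
          subst hm; subst hn
          simp only [Nat.cast_zero] at h
          linarith
        · have h1 : (1:ℝ) ≤ (m:ℝ) + (n:ℝ) := by exact_mod_cast h'
          linarith
      rcases eq_or_lt_of_le ht.1 with h0 | h0
      · -- t = 0
        rw [hf]
        simp only [← h0]
        rw [Real.zero_rpow (show c ≠ 0 by
            rw [hc]; intro hcon; exact hck 0 k (by push_cast; linarith)),
          Real.zero_rpow (show (j:ℝ) + k + θ - 1 ≠ 0 from hck j k)]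
        simp
      · -- t > 0
        rw [hf]
        simp only []
        rw [mul_assoc, ← Real.rpow_natCast t j, ← Real.rpow_add h0]
        congr 1
        rw [hc]; ring
    rw [intervalIntegral.integral_congr hEq, intervalIntegral.integral_const_mul,
      integral_rpow (Or.inl (by linarith)), sub_add_cancel, Real.one_rpow,
      Real.zero_rpow hj.ne', div_eq_mul_inv, div_eq_mul_inv]
    ring
  -- integrability of each term
  have hInt : ∀ j : ℕ, IntervalIntegrable (f j) MeasureTheory.volume 0 1 := by
    intro j
    have : IntervalIntegrable (fun t : ℝ => t ^ c) MeasureTheory.volume 0 1 :=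
      intervalIntegral.intervalIntegrable_rpow' hcm1
    exact this.continuousOn_mul (by fun_prop)
  have hIntIoc : ∀ j : ℕ, MeasureTheory.IntegrableOn (f j) (Set.Ioc 0 1) := by
    intro j
    have := (hInt j)
    rwa [intervalIntegrable_iff_integrableOn_Ioc_of_le (by norm_num)] at this
  have hnn : ∀ j : ℕ, ∀ t ∈ Set.Ioc (0:ℝ) 1, 0 ≤ f j t := by
    intro j t ht
    have h0 : 0 ≤ t := ht.1.le
    exact mul_nonneg (mul_nonneg (hilbX_pos hθ0 j).le (by positivity)) (Real.rpow_nonneg h0 c)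
  -- Step C : interchange
  have hmeas : ∀ j : ℕ, MeasureTheory.AEStronglyMeasurable (f j)
      (MeasureTheory.volume.restrict (Set.Ioc (0:ℝ) 1)) := fun j => (hIntIoc j).1
  have hlint : ∀ j : ℕ, ∫⁻ t, ‖f j t‖₊ ∂(MeasureTheory.volume.restrict (Set.Ioc (0:ℝ) 1))
      = ENNReal.ofReal (hilbX θ j / ((j : ℝ) + k + θ)) := by
    intro j
    have hae : 0 ≤ᵐ[MeasureTheory.volume.restrict (Set.Ioc (0:ℝ) 1)] f j :=
      (MeasureTheory.ae_restrict_iff' measurableSet_Ioc).2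
        (MeasureTheory.ae_of_all _ (hnn j))
    have hOf := MeasureTheory.ofReal_integral_eq_lintegral_ofReal (hIntIoc j) hae
    have hval : ∫ t in Set.Ioc (0:ℝ) 1, f j t = hilbX θ j / ((j : ℝ) + k + θ) := by
      rw [← intervalIntegral.integral_of_le (by norm_num : (0:ℝ) ≤ 1)]
      exact hA j
    have hlim : (∫⁻ t, ‖f j t‖₊ ∂(MeasureTheory.volume.restrict (Set.Ioc (0:ℝ) 1)))
        = ∫⁻ t, ENNReal.ofReal (f j t) ∂(MeasureTheory.volume.restrict (Set.Ioc (0:ℝ) 1)) := by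
      apply MeasureTheory.lintegral_congr_ae
      filter_upwards [hae] with t hht
      rw [← Real.enorm_eq_ofReal hht]; rfl
    rw [hlim, ← hOf, hval]
  have hfin : (∑' j : ℕ, ∫⁻ t, ‖f j t‖₊
      ∂(MeasureTheory.volume.restrict (Set.Ioc (0:ℝ) 1))) ≠ ⊤ := by
    rw [tsum_congr hlint, ← ENNReal.ofReal_tsum_of_nonneg
      (fun j => div_nonneg (hilbX_pos hθ0 j).le (by
        have := Nat.cast_nonneg (α := ℝ) j; have := Nat.cast_nonneg (α := ℝ) k; positivity)) hS]
    exact ENNReal.ofReal_ne_top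
  have hinterchange := MeasureTheory.integral_tsum hmeas hfin
  -- Step D : evaluate the integral of the sum
  have hD : (∫ t in Set.Ioc (0:ℝ) 1, ∑' j : ℕ, f j t)
      = Real.Gamma θ * (Real.Gamma ((k:ℝ) + θ) * Real.Gamma (1 - θ)
          / Real.Gamma (((k:ℝ) + θ) + (1 - θ))) := by
    rw [MeasureTheory.integral_Ioc_eq_integral_Ioo]
    rw [MeasureTheory.setIntegral_congr_fun measurableSet_Ioo
      (g := fun t => Real.Gamma θ * (t ^ (((k:ℝ) + θ) - 1) * (1 - t) ^ ((1 - θ) - 1)))]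
    · rw [MeasureTheory.integral_const_mul, ← MeasureTheory.integral_Ioc_eq_integral_Ioo,
        ← intervalIntegral.integral_of_le (by norm_num : (0:ℝ) ≤ 1),
        real_beta (by positivity) (by linarith)]
    · intro t ht
      have ht0 : 0 < t := ht.1
      have ht1 : t < 1 := ht.2
      have hbin := (hilbX_binomial hθ0 hθ1 ht0.le ht1).tsum_eq
      simp only [hf]
      rw [tsum_mul_right, hbin]
      have e1 : t ^ c = t ^ (((k:ℝ) + θ) - 1) := by rw [hc]
      have e2 : (1 - t) ^ (-θ) = (1 - t) ^ ((1 - θ) - 1) := by norm_num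
      rw [e1, e2]
      ring
  -- assemble
  have htsum : (∑' j : ℕ, hilbX θ j / ((j : ℝ) + k + θ))
      = Real.Gamma θ * Real.Gamma (1 - θ) * hilbX θ k := by
    have hval : ∀ j : ℕ, (∫ t, f j t ∂(MeasureTheory.volume.restrict (Set.Ioc (0:ℝ) 1)))
        = hilbX θ j / ((j : ℝ) + k + θ) := by
      intro j
      rw [← intervalIntegral.integral_of_le (by norm_num : (0:ℝ) ≤ 1)]
      exact hA j
    calc (∑' j : ℕ, hilbX θ j / ((j : ℝ) + k + θ))
        = ∑' j : ℕ, (∫ t, f j t ∂(MeasureTheory.volume.restrict (Set.Ioc (0:ℝ) 1))) :=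
          (tsum_congr hval).symm
      _ = ∫ t, (∑' j : ℕ, f j t) ∂(MeasureTheory.volume.restrict (Set.Ioc (0:ℝ) 1)) :=
          hinterchange.symm
      _ = Real.Gamma θ * (Real.Gamma ((k:ℝ) + θ) * Real.Gamma (1 - θ)
            / Real.Gamma (((k:ℝ) + θ) + (1 - θ))) := hD
      _ = Real.Gamma θ * Real.Gamma (1 - θ) * hilbX θ k := by
          have e3 : ((k:ℝ) + θ) + (1 - θ) = (k:ℝ) + 1 := by ring
          rw [e3, Real.Gamma_nat_eq_factorial k]
          rw [hilbX]
          have : (k.factorial : ℝ) ≠ 0 := by exact_mod_cast k.factorial_pos.ne'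
          field_simp
  exact htsum ▸ hS.hasSum

lemma amgm_aux (a b u v : ℝ) (ha : 0 < a) (hb : 0 < b) :
    |u * v| ≤ (a / b * v ^ 2 + b / a * u ^ 2) / 2 := by
  have e : a / b * v ^ 2 + b / a * u ^ 2 = (a ^ 2 * v ^ 2 + b ^ 2 * u ^ 2) / (a * b) := by
    field_simp
  rw [e, div_div, le_div_iff₀ (by positivity), abs_mul]
  nlinarith [sq_nonneg (a * |v| - b * |u|), sq_abs u, sq_abs v, abs_nonneg u, abs_nonneg v,
    mul_nonneg (abs_nonneg u) (abs_nonneg v)]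

lemma square_sum_nonneg {θ : ℝ} (hθ0 : 0 < θ) (hθ : θ < 1/2) (ξ : ℕ → ℝ) (n : ℕ) :
    0 ≤ ∑ p ∈ Finset.range n ×ˢ Finset.range n,
      ξ p.1 * ξ p.2 / ((p.1 : ℝ) + p.2 + θ) := by
  have hck : ∀ m : ℕ, ((m:ℝ) + θ - 1) ≠ 0 := by
    intro m h
    rcases Nat.eq_zero_or_pos m with h' | h'
    · subst h'; simp only [Nat.cast_zero] at h; linarith
    · have h1 : (1:ℝ) ≤ (m:ℝ) := by exact_mod_cast h'
      linarith
  have hint : ∀ m : ℕ, IntervalIntegrable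
      (fun t : ℝ => t ^ (θ - 1) * t ^ m) MeasureTheory.volume 0 1 :=
    fun m => (intervalIntegral.intervalIntegrable_rpow' (by linarith)).mul_continuousOn
      (by fun_prop)
  have hval : ∀ m : ℕ, ∫ t in (0:ℝ)..1, t ^ (θ - 1) * t ^ m = 1 / ((m:ℝ) + θ) := by
    intro m
    have hEq : Set.EqOn (fun t : ℝ => t ^ (θ - 1) * t ^ m)
        (fun t : ℝ => t ^ (((m:ℝ) + θ) - 1)) (Set.uIcc (0:ℝ) 1) := by
      intro t ht
      rw [Set.uIcc_of_le (by norm_num : (0:ℝ) ≤ 1)] at ht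
      rcases eq_or_lt_of_le ht.1 with h0 | h0
      · simp only [← h0]
        rw [Real.zero_rpow (show θ - 1 ≠ 0 by intro h; exact hck 0 (by push_cast; linarith)),
          Real.zero_rpow (show (m:ℝ) + θ - 1 ≠ 0 from hck m)]
        simp
      · simp only []
        rw [← Real.rpow_natCast t m, ← Real.rpow_add h0]
        congr 1
        ring
    rw [intervalIntegral.integral_congr hEq, integral_rpow (Or.inl (by
      have := Nat.cast_nonneg (α := ℝ) m; linarith)), sub_add_cancel, Real.one_rpow,
      Real.zero_rpow (by have := Nat.cast_nonneg (α := ℝ) m; positivity : ((m:ℝ) + θ) ≠ 0)]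
    ring
  have key : ∑ p ∈ Finset.range n ×ˢ Finset.range n, ξ p.1 * ξ p.2 / ((p.1 : ℝ) + p.2 + θ)
      = ∫ t in (0:ℝ)..1, t ^ (θ - 1) * (∑ k ∈ Finset.range n, ξ k * t ^ k) ^ 2 := by
    have hexp : ∀ t : ℝ, t ^ (θ - 1) * (∑ k ∈ Finset.range n, ξ k * t ^ k) ^ 2
        = ∑ p ∈ Finset.range n ×ˢ Finset.range n,
            ξ p.1 * ξ p.2 * (t ^ (θ - 1) * t ^ (p.1 + p.2)) := by
      intro t
      rw [sq, Finset.sum_mul_sum, Finset.sum_product]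
      rw [Finset.mul_sum]
      apply Finset.sum_congr rfl
      intro j _
      rw [Finset.mul_sum]
      apply Finset.sum_congr rfl
      intro k _
      rw [pow_add]
      ring
    have hswap : (∫ t in (0:ℝ)..1, t ^ (θ - 1) * (∑ k ∈ Finset.range n, ξ k * t ^ k) ^ 2)
        = ∑ p ∈ Finset.range n ×ˢ Finset.range n,
            ∫ t in (0:ℝ)..1, ξ p.1 * ξ p.2 * (t ^ (θ - 1) * t ^ (p.1 + p.2)) := by
      rw [intervalIntegral.integral_congr (g := fun t => ∑ p ∈ Finset.range n ×ˢ Finset.range n,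
        ξ p.1 * ξ p.2 * (t ^ (θ - 1) * t ^ (p.1 + p.2))) (fun t _ => hexp t)]
      exact intervalIntegral.integral_finset_sum
        (fun p _ => (hint (p.1 + p.2)).const_mul _)
    rw [hswap]
    apply Finset.sum_congr rfl
    intro p _
    rw [intervalIntegral.integral_const_mul, hval (p.1 + p.2)]
    push_cast
    ring
  rw [key]
  apply intervalIntegral.integral_nonneg (by norm_num)
  intro t ht
  exact mul_nonneg (Real.rpow_nonneg ht.1 _) (sq_nonneg _)

/-- Hilbert's double series inequality for the generalized Hilbert matrix, `0 < θ < 1/2`: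
the bound `π/sin(πθ)` holds and is attained by some nonzero square-summable sequence. -/
theorem hilbert_inequality_small_theta (θ : ℝ) (hθ0 : 0 < θ) (hθ : θ < 1 / 2) :
    (∀ ξ : ℕ → ℝ, Summable (fun k => ξ k ^ 2) →
      Summable (fun p : ℕ × ℕ => ξ p.1 * ξ p.2 / ((p.1 : ℝ) + p.2 + θ)) ∧
      0 ≤ ∑' p : ℕ × ℕ, ξ p.1 * ξ p.2 / ((p.1 : ℝ) + p.2 + θ) ∧
      ∑' p : ℕ × ℕ, ξ p.1 * ξ p.2 / ((p.1 : ℝ) + p.2 + θ)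
        ≤ Real.pi / Real.sin (Real.pi * θ) * ∑' k : ℕ, ξ k ^ 2) ∧
    ∃ ξ : ℕ → ℝ, Summable (fun k => ξ k ^ 2) ∧ ξ ≠ 0 ∧
      ∑' p : ℕ × ℕ, ξ p.1 * ξ p.2 / ((p.1 : ℝ) + p.2 + θ)
        = Real.pi / Real.sin (Real.pi * θ) * ∑' k : ℕ, ξ k ^ 2 := by
  have hθ1 : θ < 1 := by linarith
  have hlam : Real.Gamma θ * Real.Gamma (1 - θ) = Real.pi / Real.sin (Real.pi * θ) :=
    Real.Gamma_mul_Gamma_one_sub θ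
  set lam : ℝ := Real.pi / Real.sin (Real.pi * θ) with hlamdef
  have hdpos : ∀ p : ℕ × ℕ, (0:ℝ) < (p.1 : ℝ) + p.2 + θ := by
    intro p
    have := Nat.cast_nonneg (α := ℝ) p.1; have := Nat.cast_nonneg (α := ℝ) p.2; linarith
  constructor
  · intro ξ hξ
    set f : ℕ × ℕ → ℝ := fun p => ξ p.1 * ξ p.2 / ((p.1 : ℝ) + p.2 + θ) with hfdef
    set h : ℕ × ℕ → ℝ :=
      fun q => hilbX θ q.2 / ((q.2 : ℝ) + q.1 + θ) * (ξ q.1 ^ 2 / hilbX θ q.1) with hhdef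
    have hh_nonneg : ∀ q, 0 ≤ h q := by
      intro q
      apply mul_nonneg (div_nonneg (hilbX_pos hθ0 q.2).le (by
        have := Nat.cast_nonneg (α := ℝ) q.1; have := Nat.cast_nonneg (α := ℝ) q.2; linarith))
        (div_nonneg (sq_nonneg _) (hilbX_pos hθ0 q.1).le)
    have hslice : ∀ a : ℕ, HasSum (fun b => h (a, b))
        (Real.Gamma θ * Real.Gamma (1 - θ) * hilbX θ a * (ξ a ^ 2 / hilbX θ a)) :=
      fun a => (hilbX_eigen hθ0 hθ1 a).mul_right _
    have hslice_val : ∀ a : ℕ, (Real.Gamma θ * Real.Gamma (1 - θ) * hilbX θ a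
        * (ξ a ^ 2 / hilbX θ a)) = lam * ξ a ^ 2 := by
      intro a
      rw [← hlam]
      have := (hilbX_pos hθ0 a).ne'
      field_simp
    have hsum_sums : Summable (fun a : ℕ => ∑' b, h (a, b)) := by
      apply Summable.congr (hξ.mul_left lam)
      intro a
      rw [(hslice a).tsum_eq, hslice_val a]
    have hh_summable : Summable h := by
      rw [summable_prod_of_nonneg hh_nonneg]
      exact ⟨fun a => (hslice a).summable, hsum_sums⟩
    have hh_tsum : ∑' q, h q = lam * ∑' k, ξ k ^ 2 := by
      rw [Summable.tsum_prod' hh_summable (fun a => (hslice a).summable)]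
      calc (∑' a, ∑' b, h (a, b)) = ∑' a, lam * ξ a ^ 2 := by
            apply tsum_congr
            intro a
            rw [(hslice a).tsum_eq, hslice_val a]
        _ = lam * ∑' k, ξ k ^ 2 := tsum_mul_left
    -- the swapped version
    have hswap_summable : Summable (fun p : ℕ × ℕ => h p.swap) := by
      have := (Equiv.prodComm ℕ ℕ).summable_iff (f := h)
      rw [← this] at hh_summable
      exact hh_summable.congr (fun p => rfl)
    have hswap_tsum : ∑' p : ℕ × ℕ, h p.swap = lam * ∑' k, ξ k ^ 2 := by
      rw [← hh_tsum]
      exact ((Equiv.prodComm ℕ ℕ).tsum_eq h)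
    -- pointwise bound
    have hbound : ∀ p : ℕ × ℕ, |f p| ≤ (h p.swap + h p) / 2 := by
      rintro ⟨j, k⟩
      have hD : (0:ℝ) < (j : ℝ) + k + θ := hdpos (j, k)
      have ha := hilbX_pos hθ0 j
      have hb := hilbX_pos hθ0 k
      have hkey := amgm_aux (hilbX θ j) (hilbX θ k) (ξ j) (ξ k) ha hb
      have hfp : |f (j, k)| = |ξ j * ξ k| / ((j : ℝ) + k + θ) := by
        show |ξ j * ξ k / ((j : ℝ) + k + θ)| = _
        rw [abs_div, abs_of_pos hD]
      have hswap_eq : h (j, k).swap + h (j, k)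
          = (hilbX θ j / hilbX θ k * ξ k ^ 2 + hilbX θ k / hilbX θ j * ξ j ^ 2)
              / ((j : ℝ) + k + θ) := by
        show hilbX θ j / ((j : ℝ) + k + θ) * (ξ k ^ 2 / hilbX θ k)
            + hilbX θ k / ((k : ℝ) + j + θ) * (ξ j ^ 2 / hilbX θ j) = _
        have e1 : (k : ℝ) + j + θ = (j : ℝ) + k + θ := by ring
        rw [e1]
        field_simp
      have e2 : (hilbX θ j / hilbX θ k * ξ k ^ 2 + hilbX θ k / hilbX θ j * ξ j ^ 2)
            / ((j : ℝ) + k + θ) / 2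
          = ((hilbX θ j / hilbX θ k * ξ k ^ 2 + hilbX θ k / hilbX θ j * ξ j ^ 2) / 2)
            / ((j : ℝ) + k + θ) := by ring
      rw [hfp, hswap_eq, e2]
      gcongr
    -- summability of f
    have hg_summable : Summable (fun p : ℕ × ℕ => (h p.swap + h p) / 2) :=
      (hswap_summable.add hh_summable).div_const 2
    have hf_summable : Summable f := by
      apply Summable.of_norm_bounded hg_summable
      intro p
      rw [Real.norm_eq_abs]
      exact hbound p
    have hg_tsum : ∑' p : ℕ × ℕ, (h p.swap + h p) / 2 = lam * ∑' k, ξ k ^ 2 := by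
      rw [tsum_div_const, Summable.tsum_add hswap_summable hh_summable, hswap_tsum, hh_tsum]
      ring
    have hf_le : ∑' p, f p ≤ lam * ∑' k, ξ k ^ 2 := by
      rw [← hg_tsum]
      apply Summable.tsum_le_tsum (fun p => (le_abs_self (f p)).trans (hbound p)) hf_summable hg_summable
    -- nonnegativity via square partial sums
    have hf_nonneg : 0 ≤ ∑' p, f p := by
      have hmono : Monotone (fun n : ℕ => Finset.range n ×ˢ Finset.range n) := by
        intro m n hmn
        exact Finset.product_subset_product (Finset.range_subset_range.2 hmn)
          (Finset.range_subset_range.2 hmn)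
      have hcov : ∀ p : ℕ × ℕ, ∃ n : ℕ, p ∈ Finset.range n ×ˢ Finset.range n := by
        intro p
        refine ⟨max p.1 p.2 + 1, ?_⟩
        rw [Finset.mem_product, Finset.mem_range, Finset.mem_range]
        exact ⟨Nat.lt_succ_of_le (le_max_left _ _), Nat.lt_succ_of_le (le_max_right _ _)⟩
      have htend : Filter.Tendsto (fun n : ℕ => Finset.range n ×ˢ Finset.range n)
          Filter.atTop Filter.atTop := hmono.tendsto_atTop_finset hcov
      have hlim := (hf_summable.hasSum.comp htend)
      exact ge_of_tendsto' hlim (fun n => square_sum_nonneg hθ0 hθ ξ n)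
    exact ⟨hf_summable, hf_nonneg, hf_le⟩
  · -- the extremal sequence
    refine ⟨hilbX θ, hilbX_sq_summable hθ0 hθ, ?_, ?_⟩
    · intro hzero
      have := congrFun hzero 0
      exact (hilbX_pos hθ0 0).ne' this
    · set f : ℕ × ℕ → ℝ := fun p => hilbX θ p.1 * hilbX θ p.2 / ((p.1 : ℝ) + p.2 + θ) with hfdef
      have hslice : ∀ j : ℕ, HasSum (fun k => f (j, k)) (lam * hilbX θ j ^ 2) := by
        intro j
        have h1 := (hilbX_eigen hθ0 hθ1 j).mul_left (hilbX θ j)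
        have h2 : ∀ k : ℕ, hilbX θ j * (hilbX θ k / ((k : ℝ) + j + θ)) = f (j, k) := by
          intro k
          show _ = hilbX θ j * hilbX θ k / ((j : ℝ) + k + θ)
          rw [show (k : ℝ) + j + θ = (j : ℝ) + k + θ by ring]
          ring
        have h3 : hilbX θ j * (Real.Gamma θ * Real.Gamma (1 - θ) * hilbX θ j)
            = lam * hilbX θ j ^ 2 := by
          rw [hlam]; ring
        have hfun : (fun k : ℕ => hilbX θ j * (hilbX θ k / ((k : ℝ) + j + θ)))
            = fun k : ℕ => f (j, k) := funext h2
        exact h3 ▸ (hfun ▸ h1)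
      have hf_nonneg : ∀ p : ℕ × ℕ, 0 ≤ f p := by
        intro p
        apply div_nonneg (mul_nonneg (hilbX_pos hθ0 p.1).le (hilbX_pos hθ0 p.2).le)
          (hdpos p).le
      have hsums : Summable (fun j : ℕ => ∑' k, f (j, k)) := by
        apply Summable.congr ((hilbX_sq_summable hθ0 hθ).mul_left lam)
        intro j
        rw [(hslice j).tsum_eq]
      have hf_summable : Summable f := by
        rw [summable_prod_of_nonneg hf_nonneg]
        exact ⟨fun j => (hslice j).summable, hsums⟩
      rw [Summable.tsum_prod' hf_summable (fun j => (hslice j).summable)]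
      calc (∑' j, ∑' k, f (j, k)) = ∑' j, lam * hilbX θ j ^ 2 := by
            apply tsum_congr
            intro j
            rw [(hslice j).tsum_eq]
        _ = lam * ∑' k, hilbX θ k ^ 2 := tsum_mul_left
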